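/- Let G be a finite group and σ a partition of the set of all primes such that exactly two classes σ_1, σ_2 of σ meet π(G), and set π = σ_1 ∩ π(G). Suppose that for every prime p dividing |G|, every Sylow p-subgroup P of G, and every maximal subgroup V of P, there exists a σ-soluble subgroup T of G with VT = G. Then G possesses a Hall π-subgroup, a Hall π'-subgroup, a Hall (π ∪ {p})-subgroup for every prime p ∈ σ_2 ∩ π(G), and a Hall (π' ∪ {q})-subgroup for every prime q ∈ π. -/

import Mathlib

open scoped Pointwise

/-- `σ` is a partition of the set of all primes: each class is nonempty, the
classes are pairwise disjoint, and their union is the set of all primes. -/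
def SigmaPartition {ι : Type*} (σ : ι → Set ℕ) : Prop :=
  (∀ i, (σ i).Nonempty) ∧ (Pairwise fun i j => Disjoint (σ i) (σ j)) ∧
    (⋃ i, σ i) = {p : ℕ | p.Prime}

/-- A group is `σ`-primary if all primes dividing its order lie in a single class `σ i`. -/
def SigmaPrimary {ι : Type*} (σ : ι → Set ℕ) (G : Type*) [Group G] : Prop :=
  ∃ i, ∀ p : ℕ, p.Prime → p ∣ Nat.card G → p ∈ σ i

/-- A group is `σ`-soluble if it has a normal series all of whose factors are
`σ`-primary (the order of the factor `c k.succ / c k.castSucc` is the index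
`((c k.castSucc).subgroupOf (c k.succ)).index`). -/
def SigmaSoluble {ι : Type*} (σ : ι → Set ℕ) (G : Type*) [Group G] : Prop :=
  ∃ (n : ℕ) (c : Fin (n + 1) → Subgroup G),
    c 0 = ⊥ ∧ c (Fin.last n) = ⊤ ∧ Monotone c ∧ (∀ k, (c k).Normal) ∧
    ∀ k : Fin n, ∃ i, ∀ p : ℕ, p.Prime →
      p ∣ ((c k.castSucc).subgroupOf (c k.succ)).index → p ∈ σ i

/-- A group is `σ`-nilpotent if it is the (internal) direct product of finitely many
`σ`-primary (normal) subgroups. -/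
def SigmaNilpotent {ι : Type*} (σ : ι → Set ℕ) (G : Type*) [Group G] : Prop :=
  ∃ (n : ℕ) (H : Fin n → Subgroup G),
    (∀ k, (H k).Normal) ∧ iSupIndep H ∧ (⨆ k, H k) = ⊤ ∧
    ∀ k, ∃ i, ∀ p : ℕ, p.Prime → p ∣ Nat.card (H k) → p ∈ σ i

/-- A Hall `ρ`-subgroup: all primes dividing its order lie in `ρ`, and no prime
dividing its index lies in `ρ`. -/
def IsHallSubgroup {G : Type*} [Group G] (ρ : Set ℕ) (H : Subgroup G) : Prop :=
  (∀ p : ℕ, p.Prime → p ∣ Nat.card H → p ∈ ρ) ∧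
  (∀ p : ℕ, p.Prime → p ∣ H.index → p ∉ ρ)

/-- A Hall `σ i`-subgroup of `G`. -/
def IsHallSigmaSubgroup {ι : Type*} (σ : ι → Set ℕ) {G : Type*} [Group G]
    (i : ι) (H : Subgroup G) : Prop :=
  IsHallSubgroup (σ i) H

/-- A complete Hall `σ`-set of `G`: every nontrivial member is a Hall
`σ i`-subgroup for some `i`, and for every `i` with `σ i ∩ π(G) ≠ ∅` the set
contains exactly one Hall `σ i`-subgroup of `G`. -/
def CompleteHallSigmaSet {ι : Type*} (σ : ι → Set ℕ) (G : Type*) [Group G]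
    (ℋ : Set (Subgroup G)) : Prop :=
  (∀ H ∈ ℋ, H ≠ ⊥ → ∃ i, IsHallSigmaSubgroup σ i H) ∧
  ∀ i, (∃ p : ℕ, p.Prime ∧ p ∈ σ i ∧ p ∣ Nat.card G) →
    ∃! H : Subgroup G, H ∈ ℋ ∧ IsHallSigmaSubgroup σ i H

/-- A subgroup `A` is `σ`-permutable in `G` if `G` has a complete Hall `σ`-set `ℋ`
with `A Hˣ = Hˣ A` for all `H ∈ ℋ` and all `x ∈ G`. -/
def SigmaPermutable {ι : Type*} (σ : ι → Set ℕ) {G : Type*} [Group G]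
    (A : Subgroup G) : Prop :=
  ∃ ℋ : Set (Subgroup G), CompleteHallSigmaSet σ G ℋ ∧
    ∀ H ∈ ℋ, ∀ x : G,
      (A : Set G) * (H.map (MulAut.conj x).toMonoidHom : Set G) =
        (H.map (MulAut.conj x).toMonoidHom : Set G) * (A : Set G)

/-- `G` is a `PσT`-group: `σ`-permutability is transitive, i.e. if `H` is
`σ`-permutable in `G` and `K` is `σ`-permutable in `H`, then `K` is
`σ`-permutable in `G`. -/
def IsPSigmaT {ι : Type*} (σ : ι → Set ℕ) (G : Type*) [Group G] : Prop :=
  ∀ H : Subgroup G, SigmaPermutable σ H →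
    ∀ K : Subgroup ↥H, SigmaPermutable σ K →
      SigmaPermutable σ (K.map H.subtype)

universe u

open Subgroup

/-- primes of `m` are either all in `ρ`, or at most one of them is in `ρ`. -/
def Biased (ρ : Set ℕ) (m : ℕ) : Prop :=
  (∀ p : ℕ, p.Prime → p ∣ m → p ∈ ρ) ∨ ∃ q, ∀ p : ℕ, p.Prime → p ∣ m → p ∈ ρ → p = q

lemma Biased.of_dvd {ρ : Set ℕ} {m n : ℕ} (h : Biased ρ n) (hd : m ∣ n) : Biased ρ m := by
  rcases h with h | ⟨q, h⟩
  · exact Or.inl fun p hp hpm => h p hp (hpm.trans hd)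
  · exact Or.inr ⟨q, fun p hp hpm hpρ => h p hp (hpm.trans hd) hpρ⟩

def RhoSep (ρ : Set ℕ) (T : Type*) [Group T] : Prop :=
  ∃ (n : ℕ) (c : Fin (n + 1) → Subgroup T),
    c 0 = ⊥ ∧ c (Fin.last n) = ⊤ ∧ Monotone c ∧ (∀ k, (c k).Normal) ∧
    ∀ k : Fin n, Biased ρ ((c k.castSucc).subgroupOf (c k.succ)).index

variable {T : Type u} [Group T]

lemma index_eq_of_mul_eq_univ {A B : Subgroup T}
    (h : (A : Set T) * (B : Set T) = Set.univ) :
    B.index = (B.subgroupOf A).index := by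
  have key : ∀ a b : A, (QuotientGroup.leftRel (B.subgroupOf A)) a b →
      (QuotientGroup.leftRel B) (a : T) (b : T) := by
    intro a b hab
    rw [QuotientGroup.leftRel_apply] at hab ⊢
    exact hab
  let f : A ⧸ (B.subgroupOf A) → T ⧸ B :=
    Quotient.map' (s₁ := QuotientGroup.leftRel (B.subgroupOf A))
      (s₂ := QuotientGroup.leftRel B) Subtype.val key
  have hinj : Function.Injective f := by
    intro x y
    induction x using Quotient.inductionOn' with | _ a => ?_
    induction y using Quotient.inductionOn' with | _ b => ?_
    intro hxy
    have h1 : (QuotientGroup.leftRel B) (a : T) (b : T) := Quotient.exact' hxy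
    rw [QuotientGroup.leftRel_apply] at h1
    exact Quotient.sound' (by rwa [QuotientGroup.leftRel_apply])
  have hsurj : Function.Surjective f := by
    intro x
    induction x using Quotient.inductionOn' with | _ t => ?_
    have ht : t ∈ (A : Set T) * (B : Set T) := h ▸ Set.mem_univ t
    obtain ⟨a, ha, b, hb, rfl⟩ := ht
    refine ⟨Quotient.mk'' ⟨a, ha⟩, ?_⟩
    apply Quotient.sound'
    rw [QuotientGroup.leftRel_apply]
    simpa using hb
  show Nat.card (T ⧸ B) = Nat.card (A ⧸ B.subgroupOf A)
  exact (Nat.card_eq_of_bijective f ⟨hinj, hsurj⟩).symm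

lemma sub_factor_dvd {A B : Subgroup T} (hA : A.Normal) (M : Subgroup T) :
    ((A.subgroupOf M).subgroupOf (B.subgroupOf M)).index ∣ (A.subgroupOf B).index := by
  haveI : (A.subgroupOf B).Normal := hA.subgroupOf B
  let incl : ↥(B.subgroupOf M) →* ↥B :=
    { toFun := fun x => ⟨(x : ↥M), x.2⟩, map_one' := rfl, map_mul' := fun _ _ => rfl }
  let φ := (QuotientGroup.mk' (A.subgroupOf B)).comp incl
  have hker : φ.ker = (A.subgroupOf M).subgroupOf (B.subgroupOf M) := by
    ext x
    simp only [φ, incl, MonoidHom.mem_ker, MonoidHom.comp_apply, MonoidHom.coe_mk,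
      OneHom.coe_mk, QuotientGroup.mk'_apply, QuotientGroup.eq_one_iff,
      Subgroup.mem_subgroupOf]
  calc ((A.subgroupOf M).subgroupOf (B.subgroupOf M)).index
      = Nat.card φ.range := by rw [← hker, Subgroup.index_ker]
    _ ∣ Nat.card (↥B ⧸ (A.subgroupOf B)) := Subgroup.card_subgroup_dvd_card _
    _ = (A.subgroupOf B).index := rfl

lemma map_factor_dvd {A B : Subgroup T} (hA : A.Normal) {Q : Type u} [Group Q]
    (f : T →* Q) (hf : Function.Surjective f) :
    ((A.map f).subgroupOf (B.map f)).index ∣ (A.subgroupOf B).index := by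
  haveI hAm : (A.map f).Normal := hA.map f hf
  haveI : ((A.map f).subgroupOf (B.map f)).Normal := hAm.subgroupOf _
  haveI : (A.subgroupOf B).Normal := hA.subgroupOf B
  let ψ : ↥B →* ↥(B.map f) ⧸ ((A.map f).subgroupOf (B.map f)) :=
    (QuotientGroup.mk' _).comp (f.subgroupMap B)
  have hsurj : Function.Surjective ψ :=
    (QuotientGroup.mk'_surjective _).comp (f.subgroupMap_surjective B)
  have hle : A.subgroupOf B ≤ ψ.ker := by
    intro x hx
    simp only [ψ, MonoidHom.mem_ker, MonoidHom.comp_apply, QuotientGroup.mk'_apply,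
      QuotientGroup.eq_one_iff, Subgroup.mem_subgroupOf]
    exact ⟨(x : T), hx, rfl⟩
  calc ((A.map f).subgroupOf (B.map f)).index
      = Nat.card (↥(B.map f) ⧸ ((A.map f).subgroupOf (B.map f))) := rfl
    _ = Nat.card (↥B ⧸ ψ.ker) :=
        Nat.card_congr (QuotientGroup.quotientKerEquivOfSurjective ψ hsurj).toEquiv.symm
    _ = ψ.ker.index := rfl
    _ ∣ (A.subgroupOf B).index := Subgroup.index_dvd_of_le hle

lemma RhoSep.subgroup {ρ : Set ℕ} (h : RhoSep ρ T) (M : Subgroup T) : RhoSep ρ ↥M := by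
  obtain ⟨n, c, h0, hlast, hmono, hnorm, hfac⟩ := h
  refine ⟨n, fun k => (c k).subgroupOf M, ?_, ?_, ?_, ?_, ?_⟩
  · show (c 0).subgroupOf M = ⊥
    rw [h0, bot_subgroupOf]
  · show (c (Fin.last n)).subgroupOf M = ⊤
    rw [hlast, top_subgroupOf]
  · exact fun a b hab => Subgroup.comap_mono (hmono hab)
  · exact fun k => (hnorm k).subgroupOf M
  · intro k
    exact (hfac k).of_dvd (sub_factor_dvd (hnorm k.castSucc) M)

lemma RhoSep.quotient {ρ : Set ℕ} (h : RhoSep ρ T) (K : Subgroup T) [K.Normal] :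
    RhoSep ρ (T ⧸ K) := by
  obtain ⟨n, c, h0, hlast, hmono, hnorm, hfac⟩ := h
  refine ⟨n, fun k => (c k).map (QuotientGroup.mk' K), ?_, ?_, ?_, ?_, ?_⟩
  · show (c 0).map (QuotientGroup.mk' K) = ⊥
    rw [h0]; exact Subgroup.map_bot _
  · show (c (Fin.last n)).map (QuotientGroup.mk' K) = ⊤
    rw [hlast]; exact Subgroup.map_top_of_surjective _ (QuotientGroup.mk'_surjective K)
  · exact fun a b hab => Subgroup.map_mono (hmono hab)
  · exact fun k => (hnorm k).map _ (QuotientGroup.mk'_surjective K)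
  · intro k
    exact (hfac k).of_dvd
      (map_factor_dvd (hnorm k.castSucc) (QuotientGroup.mk' K) (QuotientGroup.mk'_surjective K))

lemma rhoSep_cases_aux (ρ : Set ℕ) [Finite T] :
    ∀ (n : ℕ) (c : Fin (n + 1) → Subgroup T), c 0 = ⊥ → c (Fin.last n) = ⊤ → Monotone c →
      (∀ k, (c k).Normal) →
      (∀ k : Fin n, Biased ρ ((c k.castSucc).subgroupOf (c k.succ)).index) →
      Nat.card T = 1 ∨ ∃ N : Subgroup T, N.Normal ∧ N ≠ ⊥ ∧ Biased ρ (Nat.card N) := by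
  intro n
  induction n with
  | zero =>
    intro c h0 hlast _ _ _
    left
    have hbt : (⊥ : Subgroup T) = ⊤ := by
      rw [← h0, ← hlast, show (Fin.last 0) = (0 : Fin 1) from rfl]
    rw [← Subgroup.card_top (G := T), ← hbt, Subgroup.card_bot]
  | succ n ih =>
    intro c h0 hlast hmono hnorm hfac
    by_cases h1 : c 1 = ⊥
    · refine ih (fun k => c k.succ) ?_ ?_ ?_ ?_ ?_
      · show c (0 : Fin (n + 1)).succ = ⊥
        rw [Fin.succ_zero_eq_one]; exact h1
      · show c (Fin.last n).succ = ⊤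
        rw [Fin.succ_last]; exact hlast
      · exact hmono.comp (Fin.strictMono_succ.monotone)
      · exact fun k => hnorm _
      · intro k
        have := hfac k.succ
        rwa [← Fin.succ_castSucc] at this
    · refine Or.inr ⟨c 1, hnorm 1, h1, ?_⟩
      have := hfac 0
      rw [show (0 : Fin (n + 1)).castSucc = (0 : Fin (n + 2)) from rfl, h0,
        bot_subgroupOf, index_bot, Fin.succ_zero_eq_one] at this
      exact this

lemma RhoSep.cases {ρ : Set ℕ} [Finite T] (h : RhoSep ρ T) :
    Nat.card T = 1 ∨ ∃ N : Subgroup T, N.Normal ∧ N ≠ ⊥ ∧ Biased ρ (Nat.card N) := by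
  obtain ⟨n, c, h0, hlast, hmono, hnorm, hfac⟩ := h
  exact rhoSep_cases_aux ρ n c h0 hlast hmono hnorm hfac

lemma map_subtype_facts (M : Subgroup T) (H0 : Subgroup ↥M) :
    Nat.card (H0.map M.subtype) = Nat.card H0 ∧
      (H0.map M.subtype).index = H0.index * M.index := by
  constructor
  · exact (Nat.card_congr (Subgroup.equivMapOfInjective H0 M.subtype M.subtype_injective).toEquiv).symm
  · have h5 := Subgroup.relIndex_mul_index (Subgroup.map_subtype_le H0)
    have h6 : (H0.map M.subtype).relIndex M = H0.index := by
      have h7 : (H0.map M.subtype).subgroupOf M = H0 :=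
        Subgroup.comap_map_eq_self_of_injective M.subtype_injective H0
      rw [Subgroup.relIndex, h7]
    rw [← h5, h6]

lemma exists_lift [Finite T] (N : Subgroup T) [N.Normal] (Kb : Subgroup (T ⧸ N)) :
    ∃ K : Subgroup T, K.index = Kb.index ∧ Nat.card K = Nat.card Kb * Nat.card N ∧ N ≤ K ∧
      (N.subgroupOf K).index = Nat.card Kb := by
  set f := QuotientGroup.mk' N with hf
  have hfsurj : Function.Surjective f := QuotientGroup.mk'_surjective N
  have hNK : N ≤ Kb.comap f := by
    intro x hx
    have hx1 : f x = 1 := (QuotientGroup.eq_one_iff x).mpr hx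
    simp [Subgroup.mem_comap, hx1, Subgroup.one_mem]
  have hidx : (N.subgroupOf (Kb.comap f)).index = Nat.card Kb := by
    have hker : (f.comp (Kb.comap f).subtype).ker = N.subgroupOf (Kb.comap f) := by
      rw [← MonoidHom.comap_ker, hf, QuotientGroup.ker_mk']
      rfl
    rw [← hker, Subgroup.index_ker, MonoidHom.range_comp, Subgroup.range_subtype,
      Subgroup.map_comap_eq_self_of_surjective hfsurj]
  refine ⟨Kb.comap f, Subgroup.index_comap_of_surjective _ hfsurj, ?_, hNK, hidx⟩
  have h1 : Nat.card ↥(Kb.comap f) =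
      Nat.card (↥(Kb.comap f) ⧸ (N.subgroupOf (Kb.comap f))) * Nat.card (N.subgroupOf (Kb.comap f)) :=
    Subgroup.card_eq_card_quotient_mul_card_subgroup _
  have h2 : Nat.card (N.subgroupOf (Kb.comap f)) = Nat.card N :=
    Nat.card_congr (Subgroup.subgroupOfEquivOfLe hNK).toEquiv
  have h3 : Nat.card (↥(Kb.comap f) ⧸ (N.subgroupOf (Kb.comap f))) = Nat.card Kb := hidx
  rw [h1, h2, h3]

lemma exists_hall_of_rhoSep (ρ : Set ℕ) :
    ∀ (m : ℕ) (T : Type u) [Group T] [Finite T], Nat.card T < m → RhoSep ρ T →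
      ∃ H : Subgroup T, (∀ p : ℕ, p.Prime → p ∣ Nat.card H → p ∈ ρ) ∧
        (∀ p : ℕ, p.Prime → p ∣ H.index → p ∉ ρ) := by
  intro m
  induction m with
  | zero =>
    intro T _ _ hc _
    exact absurd hc (by have := Nat.card_pos (α := T); omega)
  | succ m ih =>
    intro T _ _ hcard hsep
    rcases hsep.cases with htriv | ⟨N, hN, hNbot, hNb⟩
    · refine ⟨⊥, ?_, ?_⟩
      · intro p hp hd
        rw [Subgroup.card_bot] at hd
        exact absurd (Nat.dvd_one.mp hd) hp.ne_one
      · intro p hp hd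
        rw [Subgroup.index_bot, htriv] at hd
        exact absurd (Nat.dvd_one.mp hd) hp.ne_one
    · haveI := hN
      have hN2 : 1 < Nat.card N := (Subgroup.one_lt_card_iff_ne_bot N).mpr hNbot
      have hTpos : 0 < Nat.card T := Nat.card_pos
      have hfullN : Nat.card T = Nat.card (T ⧸ N) * Nat.card N :=
        Subgroup.card_eq_card_quotient_mul_card_subgroup N
      have hqlt : Nat.card (T ⧸ N) < Nat.card T := by
        have hqpos : 0 < Nat.card (T ⧸ N) := Nat.card_pos
        calc Nat.card (T ⧸ N) < Nat.card (T ⧸ N) * Nat.card N :=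
              (Nat.lt_mul_iff_one_lt_right hqpos).mpr hN2
          _ = Nat.card T := hfullN.symm
      obtain ⟨Kb, hKbc, hKbi⟩ := ih (T ⧸ N) (by omega) (hsep.quotient N)
      obtain ⟨K, hKi, hKc, hNK, hKsub⟩ := exists_lift N Kb
      rcases hNb with hall | ⟨q, hq⟩
      · refine ⟨K, ?_, ?_⟩
        · intro p hp hd
          rw [hKc] at hd
          rcases (Nat.Prime.dvd_mul hp).mp hd with h | h
          · exact hKbc p hp h
          · exact hall p hp h
        · intro p hp hd
          rw [hKi] at hd
          exact hKbi p hp hd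
      · by_cases hqgood : q.Prime ∧ q ∣ Nat.card N ∧ q ∈ ρ
        · obtain ⟨hqp, hqd, hqρ⟩ := hqgood
          haveI : Fact q.Prime := ⟨hqp⟩
          obtain ⟨P⟩ : Nonempty (Sylow q ↥N) := inferInstance
          set Q : Subgroup T := Subgroup.map N.subtype P.toSubgroup with hQdef
          have hNcard_pos : Nat.card N ≠ 0 := Nat.card_pos.ne'
          have hQcard : Nat.card Q = q ^ (Nat.card N).factorization q := by
            rw [hQdef,
              ← Nat.card_congr (Subgroup.equivMapOfInjective _ N.subtype N.subtype_injective).toEquiv]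
            exact Sylow.card_eq_multiplicity P
          have hqQ : q ∣ Nat.card Q := by
            rw [hQcard]
            exact dvd_pow_self q (Nat.Prime.factorization_pos_of_dvd hqp hNcard_pos hqd).ne'
          have hQbot : Q ≠ ⊥ := by
            intro hb; rw [hb, Subgroup.card_bot] at hqQ
            exact hqp.ne_one (Nat.dvd_one.mp hqQ)
          have hfrat : Subgroup.normalizer (Q : Set T) ⊔ N = ⊤ := Sylow.normalizer_sup_eq_top P
          by_cases hM : Subgroup.normalizer (Q : Set T) = ⊤
          · haveI hQn : Q.Normal := Subgroup.normalizer_eq_top_iff.mp hM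
            have hQ2 : 1 < Nat.card Q := (Subgroup.one_lt_card_iff_ne_bot Q).mpr hQbot
            have hfullQ : Nat.card T = Nat.card (T ⧸ Q) * Nat.card Q :=
              Subgroup.card_eq_card_quotient_mul_card_subgroup Q
            have hqlt2 : Nat.card (T ⧸ Q) < Nat.card T := by
              have hqpos : 0 < Nat.card (T ⧸ Q) := Nat.card_pos
              calc Nat.card (T ⧸ Q) < Nat.card (T ⧸ Q) * Nat.card Q :=
                    (Nat.lt_mul_iff_one_lt_right hqpos).mpr hQ2
                _ = Nat.card T := hfullQ.symm
            obtain ⟨Kb2, hKb2c, hKb2i⟩ := ih (T ⧸ Q) (by omega) (hsep.quotient Q)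
            obtain ⟨K2, hK2i, hK2c, _, _⟩ := exists_lift Q Kb2
            refine ⟨K2, ?_, ?_⟩
            · intro p hp hd
              rw [hK2c] at hd
              rcases (Nat.Prime.dvd_mul hp).mp hd with h | h
              · exact hKb2c p hp h
              · rw [hQcard] at h
                have hpq : p = q := (Nat.prime_dvd_prime_iff_eq hp hqp).mp (hp.dvd_of_dvd_pow h)
                rwa [hpq]
            · intro p hp hd
              rw [hK2i] at hd
              exact hKb2i p hp hd
          · set M := Subgroup.normalizer (Q : Set T) with hMdef
            have hMlt : Nat.card M < Nat.card T := by
              have hd : Nat.card M ∣ Nat.card T := Subgroup.card_subgroup_dvd_card M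
              have hne : Nat.card M ≠ Nat.card T := fun h => hM (Subgroup.eq_top_of_card_eq M h)
              exact lt_of_le_of_ne (Nat.le_of_dvd hTpos hd) hne
            obtain ⟨H0, hH0c, hH0i⟩ := ih ↥M (by omega) (hsep.subgroup M)
            obtain ⟨hmc, hmi⟩ := map_subtype_facts M H0
            refine ⟨H0.map M.subtype, ?_, ?_⟩
            · intro p hp hd; rw [hmc] at hd; exact hH0c p hp hd
            · intro p hp hd
              rw [hmi] at hd
              rcases (Nat.Prime.dvd_mul hp).mp hd with h | h
              · exact hH0i p hp h
              · have hunion : (N : Set T) * (M : Set T) = Set.univ := by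
                  rw [← Subgroup.normal_mul N M, sup_comm, hfrat, Subgroup.coe_top]
                have h7 : M.index = (M.subgroupOf N).index := index_eq_of_mul_eq_univ hunion
                have h8 : P.toSubgroup ≤ M.subgroupOf N := by
                  intro x hx
                  exact Subgroup.mem_subgroupOf.mpr
                    (Subgroup.le_normalizer (Subgroup.mem_map_of_mem N.subtype hx))
                have h9 : (M.subgroupOf N).index ∣ (P.toSubgroup).index :=
                  Subgroup.index_dvd_of_le h8
                have h10 : ¬ q ∣ (P.toSubgroup).index := by
                  intro hqidx
                  have hcm : Nat.card ↥P.toSubgroup * (P.toSubgroup).index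
                      = Nat.card ↥N := Subgroup.card_mul_index P.toSubgroup
                  have hPcard : Nat.card ↥P.toSubgroup
                      = q ^ (Nat.card ↥N).factorization q := Sylow.card_eq_multiplicity P
                  have hdd : q ^ ((Nat.card ↥N).factorization q + 1) ∣ Nat.card ↥N := by
                    conv_rhs => rw [← hcm]
                    rw [hPcard, pow_succ]
                    exact mul_dvd_mul_left _ hqidx
                  exact Nat.pow_succ_factorization_not_dvd hNcard_pos hqp hdd
                intro hpρ
                rw [h7] at h
                have hpN : p ∣ Nat.card N := h.trans (Subgroup.index_dvd_card _)
                have hpq : p = q := hq p hp hpN hpρ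
                rw [hpq] at h
                exact h10 (h.trans h9)
        · have hN' : ∀ s : ℕ, s.Prime → s ∣ Nat.card N → s ∉ ρ := by
            intro s hs hsd hsρ
            exact hqgood (hq s hs hsd hsρ ▸ ⟨hs, hsd, hsρ⟩)
          haveI : (N.subgroupOf K).Normal := hN.subgroupOf K
          have hcardsub : Nat.card (N.subgroupOf K) = Nat.card N :=
            Nat.card_congr (Subgroup.subgroupOfEquivOfLe hNK).toEquiv
          have hcop : Nat.Coprime (Nat.card (N.subgroupOf K)) ((N.subgroupOf K).index) := by
            rw [hcardsub, hKsub]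
            by_contra hcon
            obtain ⟨s, hs, hsd⟩ := Nat.exists_prime_and_dvd (fun h => hcon h)
            exact hN' s hs (hsd.trans (Nat.gcd_dvd_left _ _))
              (hKbc s hs (hsd.trans (Nat.gcd_dvd_right _ _)))
          obtain ⟨C, hC⟩ := Subgroup.exists_right_complement'_of_coprime hcop
          have hNpos : 0 < Nat.card N := Nat.card_pos
          have hCcard : Nat.card C = Nat.card Kb := by
            have h1 : Nat.card (N.subgroupOf K) * Nat.card C = Nat.card K := hC.card_mul
            rw [hcardsub, hKc] at h1
            have h2 : Nat.card N * Nat.card C = Nat.card N * Nat.card Kb := by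
              rw [h1, mul_comm]
            exact Nat.eq_of_mul_eq_mul_left hNpos h2
          have hCidx : C.index = Nat.card N := by
            have h1 : Nat.card C * C.index = Nat.card K := Subgroup.card_mul_index C
            rw [hCcard, hKc] at h1
            exact Nat.eq_of_mul_eq_mul_left Nat.card_pos h1
          obtain ⟨hmc, hmi⟩ := map_subtype_facts K C
          refine ⟨C.map K.subtype, ?_, ?_⟩
          · intro p hp hd
            rw [hmc, hCcard] at hd
            exact hKbc p hp hd
          · intro p hp hd
            rw [hmi, hCidx, hKi] at hd
            rcases (Nat.Prime.dvd_mul hp).mp hd with h | h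
            · exact hN' p hp h
            · exact hKbi p hp h

lemma master {ι : Type*} (σ : ι → Set ℕ) {G : Type u} [Group G] [Finite G]
    (hsupp : ∀ p : ℕ, p.Prime → p ∣ Nat.card G →
      ∀ (P : Sylow p G) (V : Subgroup G), V < ↑P →
        (∀ W : Subgroup G, V < W → W ≤ ↑P → W = ↑P) →
        ∃ T : Subgroup G, (V : Set G) * (T : Set G) = Set.univ ∧ SigmaSoluble σ ↥T)
    (ρ : Set ℕ)
    (hcl : ∀ (i : ι) (m : ℕ), m ∣ Nat.card G →
      (∀ s : ℕ, s.Prime → s ∣ m → s ∈ σ i) → Biased ρ m) :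
    ∃ H : Subgroup G, IsHallSubgroup ρ H := by
  by_cases hcover : ∀ s : ℕ, s.Prime → s ∣ Nat.card G → s ∈ ρ
  · refine ⟨⊤, ?_, ?_⟩
    · intro p hp hd
      rw [Subgroup.card_top] at hd
      exact hcover p hp hd
    · intro p hp hd
      rw [Subgroup.index_top] at hd
      exact absurd (Nat.dvd_one.mp hd) hp.ne_one
  · push_neg at hcover
    obtain ⟨r, hrp, hrd, hrρ⟩ := hcover
    haveI : Fact r.Prime := ⟨hrp⟩
    obtain ⟨P⟩ : Nonempty (Sylow r G) := inferInstance
    have hGpos : Nat.card G ≠ 0 := Nat.card_pos.ne'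
    have hr : r ∣ Nat.card (P : Subgroup G) := by
      rw [Sylow.card_eq_multiplicity P]
      exact dvd_pow_self r (Nat.Prime.factorization_pos_of_dvd hrp hGpos hrd).ne'
    have hPbot : (P : Subgroup G) ≠ ⊥ := by
      intro hb; rw [hb, Subgroup.card_bot] at hr
      exact hrp.ne_one (Nat.dvd_one.mp hr)
    have hfin : (Set.Finite {W : Subgroup G | W < ↑P}) := by
      haveI : Finite (Subgroup G) :=
        Finite.of_injective _ (SetLike.coe_injective (A := Subgroup G))
      exact Set.toFinite _
    obtain ⟨V, hVmem, hVmax⟩ := Set.Finite.exists_maximalFor id {W : Subgroup G | W < ↑P}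
      hfin ⟨⊥, bot_lt_iff_ne_bot.mpr hPbot⟩
    have hVP : V < ↑P := hVmem
    have hVmax' : ∀ W : Subgroup G, V < W → W ≤ ↑P → W = ↑P := by
      intro W hVW hWP
      by_contra hne
      have hWlt : W < ↑P := lt_of_le_of_ne hWP hne
      exact lt_irrefl V (lt_of_lt_of_le hVW (hVmax hWlt hVW.le))
    obtain ⟨Tsub, hmul, hsol⟩ := hsupp r hrp hrd P V hVP hVmax'
    have hTindex : ∀ s : ℕ, s.Prime → s ∣ Tsub.index → s = r := by
      intro s hs hd
      have h1 : Tsub.index = (Tsub.subgroupOf V).index := index_eq_of_mul_eq_univ hmul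
      have h2 : (Tsub.subgroupOf V).index ∣ Nat.card V := Subgroup.index_dvd_card _
      have h3 : Nat.card V ∣ Nat.card (P : Subgroup G) := by
        have : Nat.card V = Nat.card (V.subgroupOf ↑P) :=
          (Nat.card_congr (Subgroup.subgroupOfEquivOfLe hVP.le).toEquiv).symm
        rw [this]
        exact Subgroup.card_subgroup_dvd_card _
      have h4 : s ∣ r ^ (Nat.card G).factorization r := by
        have := (h1 ▸ hd).trans (h2.trans h3)
        rwa [Sylow.card_eq_multiplicity P] at this
      exact (Nat.prime_dvd_prime_iff_eq hs hrp).mp (hs.dvd_of_dvd_pow h4)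
    have hsep : RhoSep ρ ↥Tsub := by
      obtain ⟨n, c, h0, hlast, hmono, hnorm, hfac⟩ := hsol
      refine ⟨n, c, h0, hlast, hmono, hnorm, fun k => ?_⟩
      obtain ⟨i, hi⟩ := hfac k
      refine hcl i _ ?_ (fun s hs hsd => hi s hs hsd)
      calc ((c k.castSucc).subgroupOf (c k.succ)).index
          ∣ Nat.card ↥(c k.succ) := Subgroup.index_dvd_card _
        _ ∣ Nat.card ↥Tsub := Subgroup.card_subgroup_dvd_card _
        _ ∣ Nat.card G := Subgroup.card_subgroup_dvd_card _
    obtain ⟨H0, hH0c, hH0i⟩ := exists_hall_of_rhoSep ρ (Nat.card ↥Tsub + 1) ↥Tsub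
      (Nat.lt_succ_self _) hsep
    obtain ⟨hmc, hmi⟩ := map_subtype_facts Tsub H0
    refine ⟨H0.map Tsub.subtype, ?_, ?_⟩
    · intro p hp hd
      rw [hmc] at hd
      exact hH0c p hp hd
    · intro p hp hd
      rw [hmi] at hd
      rcases (Nat.Prime.dvd_mul hp).mp hd with h | h
      · exact hH0i p hp h
      · intro hpρ
        rw [hTindex p hp h] at hpρ
        exact hrρ hpρ

lemma hcl_shapeA {ι : Type*} {σ : ι → Set ℕ}
    (hdisj : Pairwise fun i j => Disjoint (σ i) (σ j))
    {G : Type*} [Group G] (i₁ : ι) (E : Set ℕ) (q0 : ℕ) (hE : E ⊆ {q0}) :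
    ∀ (i : ι) (m : ℕ), m ∣ Nat.card G → (∀ s : ℕ, s.Prime → s ∣ m → s ∈ σ i) →
      Biased ((σ i₁ ∩ {p : ℕ | p.Prime ∧ p ∣ Nat.card G}) ∪ E) m := by
  intro i m hmd hm
  by_cases h1 : ∀ s : ℕ, s.Prime → s ∣ m →
      s ∈ (σ i₁ ∩ {p : ℕ | p.Prime ∧ p ∣ Nat.card G}) ∪ E
  · exact Or.inl h1
  · push_neg at h1
    obtain ⟨s₀, hs₀p, hs₀d, hs₀ρ⟩ := h1
    refine Or.inr ⟨q0, fun s hs hsd hsρ => ?_⟩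
    rcases hsρ with hsπ | hsE
    · have hii : i = i₁ := by
        by_contra hne'
        exact Set.disjoint_left.mp (hdisj hne') (hm s hs hsd) hsπ.1
      exact absurd (Or.inl ⟨hii ▸ hm s₀ hs₀p hs₀d, hs₀p, hs₀d.trans hmd⟩) hs₀ρ
    · exact hE hsE

lemma hcl_shapeB {ι : Type*} {σ : ι → Set ℕ}
    (hdisj : Pairwise fun i j => Disjoint (σ i) (σ j))
    {G : Type*} [Group G] (i₁ : ι) (E : Set ℕ) (q0 : ℕ) (hE : E ⊆ {q0}) :
    ∀ (i : ι) (m : ℕ), m ∣ Nat.card G → (∀ s : ℕ, s.Prime → s ∣ m → s ∈ σ i) →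
      Biased ({p : ℕ | p.Prime ∧ p ∉ σ i₁ ∩ {r : ℕ | r.Prime ∧ r ∣ Nat.card G}} ∪ E) m := by
  intro i m hmd hm
  by_cases h1 : ∀ s : ℕ, s.Prime → s ∣ m →
      s ∈ {p : ℕ | p.Prime ∧ p ∉ σ i₁ ∩ {r : ℕ | r.Prime ∧ r ∣ Nat.card G}} ∪ E
  · exact Or.inl h1
  · push_neg at h1
    obtain ⟨s₀, hs₀p, hs₀d, hs₀ρ⟩ := h1
    have hs₀π : s₀ ∈ σ i₁ ∩ {r : ℕ | r.Prime ∧ r ∣ Nat.card G} := by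
      by_contra hc
      exact hs₀ρ (Or.inl ⟨hs₀p, hc⟩)
    have hii : i = i₁ := by
      by_contra hne'
      exact Set.disjoint_left.mp (hdisj hne') (hm s₀ hs₀p hs₀d) hs₀π.1
    refine Or.inr ⟨q0, fun s hs hsd hsρ => ?_⟩
    rcases hsρ with ⟨_, hsnπ⟩ | hsE
    · exact absurd ⟨hii ▸ hm s hs hsd, hs, hsd.trans hmd⟩ hsnπ
    · exact hE hsE


/-- The Hall-subgroup existence established in the final part of the proof of
Theorem A(i): if exactly two classes `σ i₁`, `σ i₂` of `σ` meet `π(G)`,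
`π := σ i₁ ∩ π(G)`, and every maximal subgroup of every Sylow subgroup of `G` has a
`σ`-soluble supplement in `G`, then `G` has a Hall `π`-subgroup, a Hall
`π'`-subgroup, a Hall `(π ∪ {p})`-subgroup for every prime `p ∈ σ i₂ ∩ π(G)`, and a
Hall `(π' ∪ {q})`-subgroup for every prime `q ∈ π`. -/
theorem hall_subgroups_of_supplements {ι : Type*} (σ : ι → Set ℕ)
    (hσ : SigmaPartition σ) (G : Type*) [Group G] [Finite G]
    (i₁ i₂ : ι) (hne : i₁ ≠ i₂)
    (h₁ : ∃ p : ℕ, p.Prime ∧ p ∈ σ i₁ ∧ p ∣ Nat.card G)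
    (h₂ : ∃ p : ℕ, p.Prime ∧ p ∈ σ i₂ ∧ p ∣ Nat.card G)
    (honly : ∀ i, (∃ p : ℕ, p.Prime ∧ p ∈ σ i ∧ p ∣ Nat.card G) → i = i₁ ∨ i = i₂)
    (hsupp : ∀ p : ℕ, p.Prime → p ∣ Nat.card G →
      ∀ (P : Sylow p G) (V : Subgroup G), V < ↑P →
        (∀ W : Subgroup G, V < W → W ≤ ↑P → W = ↑P) →
        ∃ T : Subgroup G, (V : Set G) * (T : Set G) = Set.univ ∧ SigmaSoluble σ ↥T) :
    (∃ H : Subgroup G,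
      IsHallSubgroup (σ i₁ ∩ {p : ℕ | p.Prime ∧ p ∣ Nat.card G}) H) ∧
    (∃ H : Subgroup G,
      IsHallSubgroup {p : ℕ | p.Prime ∧ p ∉ σ i₁ ∩ {p : ℕ | p.Prime ∧ p ∣ Nat.card G}} H) ∧
    (∀ p : ℕ, p.Prime → p ∈ σ i₂ → p ∣ Nat.card G →
      ∃ H : Subgroup G,
        IsHallSubgroup ((σ i₁ ∩ {r : ℕ | r.Prime ∧ r ∣ Nat.card G}) ∪ {p}) H) ∧
    (∀ q : ℕ, q ∈ σ i₁ ∩ {r : ℕ | r.Prime ∧ r ∣ Nat.card G} →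
      ∃ H : Subgroup G,
        IsHallSubgroup
          ({r : ℕ | r.Prime ∧ r ∉ σ i₁ ∩ {s : ℕ | s.Prime ∧ s ∣ Nat.card G}} ∪ {q}) H) := by
  
  obtain ⟨-, hdisj, -⟩ := hσ
  refine ⟨?_, ?_, ?_, ?_⟩
  · obtain ⟨H, hH⟩ := master σ hsupp
      ((σ i₁ ∩ {p : ℕ | p.Prime ∧ p ∣ Nat.card G}) ∪ ∅)
      (hcl_shapeA hdisj i₁ ∅ 0 (by simp))
    rw [Set.union_empty] at hH
    exact ⟨H, hH⟩
  · obtain ⟨H, hH⟩ := master σ hsupp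
      ({p : ℕ | p.Prime ∧ p ∉ σ i₁ ∩ {r : ℕ | r.Prime ∧ r ∣ Nat.card G}} ∪ ∅)
      (hcl_shapeB hdisj i₁ ∅ 0 (by simp))
    rw [Set.union_empty] at hH
    exact ⟨H, hH⟩
  · intro p hp hp2 hpd
    exact master σ hsupp ((σ i₁ ∩ {r : ℕ | r.Prime ∧ r ∣ Nat.card G}) ∪ {p})
      (hcl_shapeA hdisj i₁ {p} p (le_refl _))
  · intro q hq
    exact master σ hsupp
      ({r : ℕ | r.Prime ∧ r ∉ σ i₁ ∩ {s : ℕ | s.Prime ∧ s ∣ Nat.card G}} ∪ {q})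
      (hcl_shapeB hdisj i₁ {q} q (le_refl _))
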